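/- Let k be an odd positive integer and let (a_0,…,a_{k−1}) be a cyclic sequence of positive integers with total sum 2n such that a_i = a_{i+(k−1)/2} for all 0 ≤ i < (k−1)/2 (indices taken in the underlying arrangement, with a_{k−1} having no homologous partner), and such that for every pair of indices the element a_{k−1} and any two elements a_i, a_j satisfy a_i + a_j > a_{k−1} when they are the extra elements in a split. Then for any partition of the cyclic sequence into two blocks A, B of consecutive elements with |A| ≤ (k−1)/2, the sum of A is strictly less than n. -/
import Mathlib


theorem stmt_19 (n k : ℕ) (hn : 0 < n) (hk : Odd k) (hk3 : 3 ≤ k)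
    (a : ℕ → ℕ) (hpos : ∀ i, i < k → 0 < a i)
    (hsum : ∑ i ∈ Finset.range k, a i = 2 * n)
    (hhom : ∀ i, i < (k - 1) / 2 → a i = a (i + (k - 1) / 2))
    (hextra : ∀ i j, i < k → j < k → i ≠ j → a (k - 1) < a i + a j) :
    ∀ s len, 0 < len → len ≤ (k - 1) / 2 →
      (∑ t ∈ Finset.range len, a ((s + t) % k)) < n := by
  obtain ⟨j, hj⟩ := hk
  set m := (k - 1) / 2 with hm
  have hkm : k = 2 * m + 1 := by omega
  have hm1 : 1 ≤ m := by omega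
  have hk0 : 0 < k := by omega
  intro s len hlen0 hlenm
  have hsk : s % k < k := Nat.mod_lt _ hk0
  -- the core modular computation
  have core : ∀ t, t < k → (s + (t + (k - s % k))) % k = t := by
    intro t ht
    rw [← Nat.mod_add_mod, show s % k + (t + (k - s % k)) = t + k by omega,
      Nat.add_mod_right, Nat.mod_eq_of_lt ht]
  have linv : ∀ t, t < k → ((s + t) % k + (k - s % k)) % k = t := by
    intro t ht
    rw [Nat.mod_add_mod, show s + t + (k - s % k) = s + (t + (k - s % k)) by ring]
    exact core t ht
  have injmod : ∀ x y, x < k → y < k → (s + x) % k = (s + y) % k → x = y := by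
    intro x y hx hy h
    rw [← linv x hx, ← linv y hy, h]
  -- the cyclic total
  have htot : ∑ t ∈ Finset.range k, a ((s + t) % k) = 2 * n := by
    rw [← hsum]
    exact Finset.sum_nbij' (i := fun t => (s + t) % k)
      (j := fun t => (t + (k - s % k)) % k)
      (fun t ht => Finset.mem_range.mpr (Nat.mod_lt _ hk0))
      (fun t ht => Finset.mem_range.mpr (Nat.mod_lt _ hk0))
      (fun t ht => by
        show ((s + t) % k + (k - s % k)) % k = t
        exact linv t (Finset.mem_range.mp ht))
      (fun t ht => by
        show (s + (t + (k - s % k)) % k) % k = t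
        rw [Nat.add_mod_mod]
        exact core t (Finset.mem_range.mp ht))
      (fun t ht => rfl)
  set D := (Finset.range len).filter (fun t => ¬ ((s + t) % k = k - 1)) with hD
  set f : ℕ → ℕ := fun t => if (s + t) % k < m then t + m else t + m + 1 with hf
  have hmem : ∀ t ∈ D, f t ∈ Finset.Ico len k := by
    intro t ht
    simp only [hD, Finset.mem_filter, Finset.mem_range] at ht
    simp only [hf, Finset.mem_Ico]
    split <;> omega
  have hinj : ∀ t1 ∈ D, ∀ t2 ∈ D, f t1 = f t2 → t1 = t2 := by
    have step : ∀ u, (s + u) % k < 2 * m → (s + (u + 1)) % k = (s + u) % k + 1 := by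
      intro u hu
      rw [show s + (u + 1) = (s + u) + 1 by ring, ← Nat.mod_add_mod,
        Nat.mod_eq_of_lt (by omega)]
    intro t1 ht1 t2 ht2 heq
    simp only [hD, Finset.mem_filter, Finset.mem_range] at ht1 ht2
    have hA1 : (s + t1) % k < k := Nat.mod_lt _ hk0
    have hA2 : (s + t2) % k < k := Nat.mod_lt _ hk0
    simp only [hf] at heq
    split at heq <;> split at heq <;> rename_i h1 h2
    · omega
    · -- t1 + m = t2 + m + 1, so t1 = t2 + 1
      have ht12 : t1 = t2 + 1 := by omega
      subst ht12
      have := step t2 (by omega)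
      omega
    · have ht21 : t2 = t1 + 1 := by omega
      subst ht21
      have := step t1 (by omega)
      omega
    · omega
  have hval : ∀ t ∈ D, a ((s + f t) % k) = a ((s + t) % k) := by
    intro t ht
    simp only [hD, Finset.mem_filter, Finset.mem_range] at ht
    have hA : (s + t) % k < k := Nat.mod_lt _ hk0
    by_cases h : (s + t) % k < m
    · have h1 : (s + f t) % k = (s + t) % k + m := by
        simp only [hf, if_pos h]
        rw [show s + (t + m) = (s + t) + m by ring, ← Nat.mod_add_mod,
          Nat.mod_eq_of_lt (by omega)]
      rw [h1]
      exact (hhom _ h).symm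
    · have h1 : (s + f t) % k = (s + t) % k - m := by
        simp only [hf, if_neg h]
        rw [show s + (t + m + 1) = (s + t) + (m + 1) by ring, ← Nat.mod_add_mod,
          Nat.mod_eq_sub_mod (by omega),
          show (s + t) % k + (m + 1) - k = (s + t) % k - m by omega,
          Nat.mod_eq_of_lt (by omega)]
      rw [h1]
      have h2 := hhom ((s + t) % k - m) (by omega)
      rw [h2]
      congr 1
      omega
  have himgsub : D.image f ⊆ Finset.Ico len k := by
    intro c hc
    obtain ⟨t, ht, rfl⟩ := Finset.mem_image.mp hc
    exact hmem t ht
  have himgsum : ∑ c ∈ D.image f, a ((s + c) % k) = ∑ t ∈ D, a ((s + t) % k) := by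
    rw [Finset.sum_image hinj]
    exact Finset.sum_congr rfl hval
  have hcardimg : (D.image f).card = D.card :=
    Finset.card_image_of_injOn (fun x hx y hy => hinj x hx y hy)
  have hsplit : (∑ t ∈ Finset.range len, a ((s + t) % k))
      + (∑ t ∈ Finset.Ico len k, a ((s + t) % k)) = 2 * n := by
    rw [← htot, Finset.sum_range_add_sum_Ico _ (show len ≤ k by omega)]
  suffices hlt : (∑ t ∈ Finset.range len, a ((s + t) % k))
      < ∑ t ∈ Finset.Ico len k, a ((s + t) % k) by omega
  by_cases hB : ∃ t0 ∈ Finset.range len, (s + t0) % k = k - 1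
  · -- the special element k-1 is in the block
    obtain ⟨t0, ht0r, ht0⟩ := hB
    simp only [Finset.mem_range] at ht0r
    have hfilt : (Finset.range len).filter (fun t => (s + t) % k = k - 1) = {t0} := by
      ext x
      simp only [Finset.mem_filter, Finset.mem_range, Finset.mem_singleton]
      constructor
      · rintro ⟨hx, hx2⟩
        exact injmod x t0 (by omega) (by omega) (hx2.trans ht0.symm)
      · rintro rfl; exact ⟨ht0r, ht0⟩
    have hblock : ∑ t ∈ Finset.range len, a ((s + t) % k)
        = a (k - 1) + ∑ t ∈ D, a ((s + t) % k) := by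
      rw [← Finset.sum_filter_add_sum_filter_not (Finset.range len)
        (fun t => (s + t) % k = k - 1), hfilt, Finset.sum_singleton, ht0]
    have hDeq2 : D = Finset.range len \ {t0} := by
      rw [hD, Finset.filter_not, hfilt]
    have hcardD : D.card = len - 1 := by
      rw [hDeq2, Finset.card_sdiff_of_subset (by simpa using ht0r), Finset.card_singleton,
        Finset.card_range]
    have hdiff : 1 < (Finset.Ico len k \ D.image f).card := by
      rw [Finset.card_sdiff_of_subset himgsub, Nat.card_Ico, hcardimg, hcardD]
      omega
    obtain ⟨c1, hc1, c2, hc2, hne⟩ := Finset.one_lt_card.mp hdiff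
    have hc1' := Finset.mem_sdiff.mp hc1
    have hc2' := Finset.mem_sdiff.mp hc2
    have hc1I := Finset.mem_Ico.mp hc1'.1
    have hc2I := Finset.mem_Ico.mp hc2'.1
    have hmodne : (s + c1) % k ≠ (s + c2) % k := by
      intro h
      exact hne (injmod c1 c2 (by omega) (by omega) h)
    have hx := hextra ((s + c1) % k) ((s + c2) % k)
      (Nat.mod_lt _ hk0) (Nat.mod_lt _ hk0) hmodne
    have hsub2 : insert c1 (insert c2 (D.image f)) ⊆ Finset.Ico len k := by
      intro x hx
      simp only [Finset.mem_insert] at hx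
      rcases hx with rfl | rfl | hx
      · exact hc1'.1
      · exact hc2'.1
      · exact himgsub hx
    calc ∑ t ∈ Finset.range len, a ((s + t) % k)
        = a (k - 1) + ∑ t ∈ D, a ((s + t) % k) := hblock
      _ < a ((s + c1) % k) + (a ((s + c2) % k) + ∑ c ∈ D.image f, a ((s + c) % k)) := by
          rw [himgsum]; omega
      _ = ∑ c ∈ insert c1 (insert c2 (D.image f)), a ((s + c) % k) := by
          rw [Finset.sum_insert (show c1 ∉ insert c2 (D.image f) by
              simp only [Finset.mem_insert]
              push_neg
              exact ⟨hne, hc1'.2⟩),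
            Finset.sum_insert hc2'.2]
      _ ≤ ∑ t ∈ Finset.Ico len k, a ((s + t) % k) :=
          Finset.sum_le_sum_of_subset hsub2
  · -- the special element is not in the block
    push_neg at hB
    have hDeq : D = Finset.range len := by
      rw [hD, Finset.filter_true_of_mem]
      intro x hx
      exact hB x hx
    have hcardD : D.card = len := by rw [hDeq, Finset.card_range]
    have hdiff : 0 < (Finset.Ico len k \ D.image f).card := by
      rw [Finset.card_sdiff_of_subset himgsub, Nat.card_Ico, hcardimg, hcardD]
      omega
    obtain ⟨c, hc⟩ := Finset.card_pos.mp hdiff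
    have hc' := Finset.mem_sdiff.mp hc
    have hcpos : 0 < a ((s + c) % k) := hpos _ (Nat.mod_lt _ hk0)
    have hsub1 : insert c (D.image f) ⊆ Finset.Ico len k := by
      intro x hx
      simp only [Finset.mem_insert] at hx
      rcases hx with rfl | hx
      · exact hc'.1
      · exact himgsub hx
    calc ∑ t ∈ Finset.range len, a ((s + t) % k)
        = ∑ t ∈ D, a ((s + t) % k) := by rw [hDeq]
      _ < a ((s + c) % k) + ∑ x ∈ D.image f, a ((s + x) % k) := by
          rw [himgsum]; omega
      _ = ∑ x ∈ insert c (D.image f), a ((s + x) % k) := by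
          rw [Finset.sum_insert hc'.2]
      _ ≤ ∑ t ∈ Finset.Ico len k, a ((s + t) % k) :=
          Finset.sum_le_sum_of_subset hsub1
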